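/- Mixed-term defect bound (from the proof of Proposition 2.1): With u_i := a^{(1)}_i ⊗ ⋯ ⊗ a^{(n)}_i, for every 1 ≤ i < j ≤ m one has ‖u_i u_j + u_j u_i‖ ≤ φ^{(n)}_{ij}. -/

import Mathlib

set_option maxHeartbeats 1000000
set_option synthInstance.maxHeartbeats 400000


open scoped BigOperators ComplexOrder

namespace Parity

variable {n : ℕ} {d : Fin n → ℕ}

/-- Kronecker product of `n` matrices, as a matrix over the product index set. -/
def kron (a : ∀ r : Fin n, Matrix (Fin (d r)) (Fin (d r)) ℂ) :
    Matrix (∀ r, Fin (d r)) (∀ r, Fin (d r)) ℂ :=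
  fun i j => ∏ r, a r (i r) (j r)

/-- The ℓ²-operator norm of a complex matrix. -/
noncomputable def opNorm {I : Type*} [Fintype I] [DecidableEq I] (A : Matrix I I ℂ) : ℝ :=
  ‖Matrix.toEuclideanCLM (𝕜 := ℂ) A‖

/-- The defect weight φ⁽ⁿ⁾ᵢⱼ. -/
noncomputable def phi {m : ℕ} (a : ∀ r : Fin n, Fin m → Matrix (Fin (d r)) (Fin (d r)) ℂ)
    (i j : Fin m) : ℝ :=
  (2 : ℝ) ^ ((1 : ℤ) - n) *
    ∑ S ∈ Finset.univ.filter (fun S : Finset (Fin n) => Even S.card),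
      (∏ r ∈ S, opNorm (a r i * a r j - a r j * a r i)) *
        (∏ r ∈ Sᶜ, opNorm (a r i * a r j + a r j * a r i))

/-- A state: positive semidefinite with trace one. -/
def IsState {I : Type*} [Fintype I] (ρ : Matrix I I ℂ) : Prop :=
  ρ.PosSemidef ∧ ρ.trace = 1

/-- The square root of a positive semidefinite matrix, as the removed `Matrix.PosSemidef.sqrt`. -/
noncomputable def psdSqrt {I : Type*} [Fintype I] [DecidableEq I] {A : Matrix I I ℂ}
    (hA : A.PosSemidef) : Matrix I I ℂ :=
  (hA.1.eigenvectorUnitary : Matrix I I ℂ) *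
    Matrix.diagonal ((↑) ∘ (√·) ∘ hA.1.eigenvalues) *
    (star hA.1.eigenvectorUnitary : Matrix I I ℂ)

/-- The trace norm `Tr √(AᴴA)`. -/
noncomputable def traceNorm {I : Type*} [Fintype I] [DecidableEq I] (A : Matrix I I ℂ) : ℝ :=
  ((psdSqrt (Matrix.posSemidef_conjTranspose_mul_self A)).trace).re

/-- Logarithm of a Hermitian matrix via the functional calculus (junk value otherwise);
an eigenvalue `0` contributes `Real.log 0 = 0`. -/
noncomputable def mlog {I : Type*} [Fintype I] [DecidableEq I] (A : Matrix I I ℂ) :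
    Matrix I I ℂ :=
  if hA : A.IsHermitian then
    (hA.eigenvectorUnitary : Matrix I I ℂ) *
      Matrix.diagonal (fun i => (Real.log (hA.eigenvalues i) : ℂ)) *
      (star hA.eigenvectorUnitary : Matrix I I ℂ)
  else 0

/-- Quantum relative entropy `D(ρ‖σ) = Tr(ρ (log ρ − log σ))` (natural logarithm). -/
noncomputable def relEntropy {I : Type*} [Fintype I] [DecidableEq I] (ρ σ : Matrix I I ℂ) : ℝ :=
  (Matrix.trace (ρ * (mlog ρ - mlog σ))).re

/-- The `r`-th marginal (partial trace over all other factors). -/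
noncomputable def marginal (ρ : Matrix (∀ r, Fin (d r)) (∀ r, Fin (d r)) ℂ) (r : Fin n) :
    Matrix (Fin (d r)) (Fin (d r)) ℂ :=
  fun a b => ∑ k : ∀ s, Fin (d s), if k r = a then ρ k (Function.update k r b) else 0

/-- Total correlation `I_tot(ρ) = D(ρ‖ρ₁ ⊗ ⋯ ⊗ ρₙ)`. -/
noncomputable def Itot (ρ : Matrix (∀ r, Fin (d r)) (∀ r, Fin (d r)) ℂ) : ℝ :=
  relEntropy ρ (kron (fun r => marginal ρ r))

/-- The set of product states. -/
def ProdStates (d : Fin n → ℕ) : Set (Matrix (∀ r, Fin (d r)) (∀ r, Fin (d r)) ℂ) :=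
  {σ | ∃ s : ∀ r : Fin n, Matrix (Fin (d r)) (Fin (d r)) ℂ,
    (∀ r, IsState (s r)) ∧ σ = kron s}

/-- The product threshold `Γ_prod(B)`. -/
noncomputable def Gamma (d : Fin n → ℕ) (B : Matrix (∀ r, Fin (d r)) (∀ r, Fin (d r)) ℂ) : ℝ :=
  sSup {x : ℝ | ∃ σ ∈ ProdStates d, x = (Matrix.trace (σ * B)).re}

/-- The excess `Δ_B(ρ)`. -/
noncomputable def excess (d : Fin n → ℕ) (B ρ : Matrix (∀ r, Fin (d r)) (∀ r, Fin (d r)) ℂ) : ℝ :=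
  max ((Matrix.trace (ρ * B)).re - Gamma d B) 0

end Parity


namespace ParityAux

open Parity Finset

variable {n : ℕ} {d : Fin n → ℕ}

lemma kron_mul (a b : ∀ r : Fin n, Matrix (Fin (d r)) (Fin (d r)) ℂ) :
    kron a * kron b = kron (fun r => a r * b r) := by
  ext p q
  simp only [Matrix.mul_apply, kron]
  rw [Finset.sum_congr rfl (fun k _ => (Finset.prod_mul_distrib).symm)]
  exact (Fintype.prod_sum (fun x j => a x (p x) j * b x j (q x))).symm

lemma kron_one : (kron (fun r => (1 : Matrix (Fin (d r)) (Fin (d r)) ℂ))) = 1 := by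
  ext p q
  simp only [kron, Matrix.one_apply]
  by_cases h : p = q
  · subst h; simp
  · rw [if_neg h]
    obtain ⟨r, hr⟩ := Function.ne_iff.mp h
    exact Finset.prod_eq_zero (Finset.mem_univ r) (by rw [if_neg hr])

lemma kron_apply (a : ∀ r : Fin n, Matrix (Fin (d r)) (Fin (d r)) ℂ)
    (p q : ∀ r, Fin (d r)) : kron a p q = ∏ r, a r (p r) (q r) := rfl

/-- single-site embedding -/
def E (r : Fin n) (b : Matrix (Fin (d r)) (Fin (d r)) ℂ) :
    ∀ s : Fin n, Matrix (Fin (d s)) (Fin (d s)) ℂ :=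
  Function.update (fun s => (1 : Matrix (Fin (d s)) (Fin (d s)) ℂ)) r b

lemma kron_E_apply (r : Fin n) (b : Matrix (Fin (d r)) (Fin (d r)) ℂ)
    (c k : Fin (d r)) (w v : ∀ s : { s // s ≠ r }, Fin (d s)) :
    kron (E r b) ((Equiv.piSplitAt r _).symm (c, w)) ((Equiv.piSplitAt r _).symm (k, v)) =
      if v = w then b c k else 0 := by
  classical
  set i0 := (Equiv.piSplitAt r (fun s => Fin (d s))).symm (c, w) with hi0
  set j0 := (Equiv.piSplitAt r (fun s => Fin (d s))).symm (k, v) with hj0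
  have hir : i0 r = c := by simp [hi0]
  have hjr : j0 r = k := by simp [hj0]
  have his : ∀ (s : Fin n) (h : s ≠ r), i0 s = w ⟨s, h⟩ := by
    intro s h; simp [hi0, h]
  have hjs : ∀ (s : Fin n) (h : s ≠ r), j0 s = v ⟨s, h⟩ := by
    intro s h; simp [hj0, h]
  rw [kron_apply]
  by_cases hvw : v = w
  · rw [if_pos hvw]
    have h1 : ∀ s ∈ Finset.univ, s ≠ r → E r b s (i0 s) (j0 s) = 1 := by
      intro s _ hs
      rw [show E r b s = 1 from Function.update_of_ne hs _ _, his s hs, hjs s hs, hvw,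
        Matrix.one_apply_eq]
    rw [Finset.prod_eq_single r h1 (fun h => absurd (Finset.mem_univ r) h)]
    rw [show E r b r = b from Function.update_self _ _ _]
    rw [hir, hjr]
  · rw [if_neg hvw]
    obtain ⟨s0, hs0⟩ := Function.ne_iff.mp hvw
    refine Finset.prod_eq_zero (Finset.mem_univ (s0 : Fin n)) ?_
    rw [show E r b (s0 : Fin n) = 1 from Function.update_of_ne s0.2 _ _,
      his _ s0.2, hjs _ s0.2]
    refine Matrix.one_apply_ne ?_
    intro h
    exact hs0 h.symm

lemma key_mulVec (r : Fin n) (b : Matrix (Fin (d r)) (Fin (d r)) ℂ)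
    (x : (∀ s, Fin (d s)) → ℂ) (c : Fin (d r)) (w : ∀ s : { s // s ≠ r }, Fin (d s)) :
    (kron (E r b)).mulVec x ((Equiv.piSplitAt r _).symm (c, w)) =
      b.mulVec (fun k => x ((Equiv.piSplitAt r _).symm (k, w))) c := by
  classical
  simp only [Matrix.mulVec, dotProduct]
  rw [← Equiv.sum_comp (Equiv.piSplitAt r (fun s => Fin (d s))).symm
    (fun j => kron (E r b) ((Equiv.piSplitAt r (fun s => Fin (d s))).symm (c, w)) j * x j)]
  rw [Fintype.sum_prod_type]
  refine Finset.sum_congr rfl fun k _ => ?_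
  rw [Finset.sum_congr rfl (fun v _ => by
    rw [kron_E_apply r b c k w v, ite_mul, zero_mul])]
  rw [Finset.sum_ite_eq' Finset.univ w (fun v => b c k * x ((Equiv.piSplitAt r (fun s => Fin (d s))).symm (k, v)))]
  rw [if_pos (Finset.mem_univ w)]

lemma mulVec_norm_le {I : Type*} [Fintype I] [DecidableEq I] (A : Matrix I I ℂ)
    (x : I → ℂ) :
    Real.sqrt (∑ c, ‖A.mulVec x c‖ ^ 2) ≤ opNorm A * Real.sqrt (∑ c, ‖x c‖ ^ 2) := by
  have e1 : ∀ (v : I → ℂ), ‖(WithLp.equiv 2 (I → ℂ)).symm v‖ = Real.sqrt (∑ c, ‖v c‖ ^ 2) := by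
    intro v
    rw [EuclideanSpace.norm_eq]
    congr 1
  have h2 : Matrix.toEuclideanCLM (𝕜 := ℂ) A ((WithLp.equiv 2 (I → ℂ)).symm x) =
      (WithLp.equiv 2 (I → ℂ)).symm (A.mulVec x) := rfl
  calc Real.sqrt (∑ c, ‖A.mulVec x c‖ ^ 2)
      = ‖(WithLp.equiv 2 (I → ℂ)).symm (A.mulVec x)‖ := (e1 _).symm
    _ = ‖Matrix.toEuclideanCLM (𝕜 := ℂ) A ((WithLp.equiv 2 (I → ℂ)).symm x)‖ :=
        (congrArg norm h2).symm
    _ ≤ ‖Matrix.toEuclideanCLM (𝕜 := ℂ) A‖ * ‖(WithLp.equiv 2 (I → ℂ)).symm x‖ :=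
        (Matrix.toEuclideanCLM (𝕜 := ℂ) A).le_opNorm _
    _ = opNorm A * Real.sqrt (∑ c, ‖x c‖ ^ 2) := by rw [e1]; rfl

lemma opNorm_nonneg {I : Type*} [Fintype I] [DecidableEq I] (A : Matrix I I ℂ) :
    0 ≤ opNorm A := norm_nonneg _

lemma opNorm_E_le (r : Fin n) (b : Matrix (Fin (d r)) (Fin (d r)) ℂ) :
    opNorm (kron (E r b)) ≤ opNorm b := by
  classical
  rw [opNorm]
  refine ContinuousLinearMap.opNorm_le_bound _ (opNorm_nonneg b) fun ξ => ?_
  set x : (∀ s, Fin (d s)) → ℂ := WithLp.equiv 2 _ ξ with hxdef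
  show ‖Matrix.toEuclideanCLM (𝕜 := ℂ) (kron (E r b)) ((WithLp.equiv 2 _).symm x)‖ ≤
    opNorm b * ‖(WithLp.equiv 2 ((∀ s, Fin (d s)) → ℂ)).symm x‖
  have e1 : ∀ (v : (∀ s, Fin (d s)) → ℂ),
      ‖(WithLp.equiv 2 ((∀ s, Fin (d s)) → ℂ)).symm v‖ = Real.sqrt (∑ c, ‖v c‖ ^ 2) := by
    intro v
    rw [EuclideanSpace.norm_eq]
    congr 1
  rw [(show Matrix.toEuclideanCLM (𝕜 := ℂ) (kron (E r b)) ((WithLp.equiv 2 _).symm x) =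
      (WithLp.equiv 2 ((∀ s, Fin (d s)) → ℂ)).symm (Matrix.toLin' (kron (E r b)) x) from rfl), e1, e1]
  simp only [Matrix.toLin'_apply]
  set e := Equiv.piSplitAt r (fun s => Fin (d s)) with he
  have hsum : ∀ (v : (∀ s, Fin (d s)) → ℂ),
      ∑ i, ‖v i‖ ^ 2 = ∑ w, ∑ c, ‖v (e.symm (c, w))‖ ^ 2 := by
    intro v
    rw [← Equiv.sum_comp e.symm (fun i => ‖v i‖ ^ 2), Fintype.sum_prod_type, Finset.sum_comm]
  rw [hsum ((kron (E r b)).mulVec x), hsum x]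
  have hterm : ∀ w, ∑ c, ‖(kron (E r b)).mulVec x (e.symm (c, w))‖ ^ 2 ≤
      opNorm b ^ 2 * ∑ c, ‖x (e.symm (c, w))‖ ^ 2 := by
    intro w
    have h := mulVec_norm_le b (fun k => x (e.symm (k, w)))
    have h2 := pow_le_pow_left₀ (Real.sqrt_nonneg _) h 2
    rw [Real.sq_sqrt (Finset.sum_nonneg fun c _ => sq_nonneg _), mul_pow,
      Real.sq_sqrt (Finset.sum_nonneg fun c _ => sq_nonneg _)] at h2
    calc ∑ c, ‖(kron (E r b)).mulVec x (e.symm (c, w))‖ ^ 2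
        = ∑ c, ‖b.mulVec (fun k => x (e.symm (k, w))) c‖ ^ 2 := by
          refine Finset.sum_congr rfl fun c _ => ?_
          rw [key_mulVec r b x c w]
      _ ≤ opNorm b ^ 2 * ∑ c, ‖x (e.symm (c, w))‖ ^ 2 := h2
  calc Real.sqrt (∑ w, ∑ c, ‖(kron (E r b)).mulVec x (e.symm (c, w))‖ ^ 2)
      ≤ Real.sqrt (opNorm b ^ 2 * ∑ w, ∑ c, ‖x (e.symm (c, w))‖ ^ 2) := by
        refine Real.sqrt_le_sqrt ?_
        rw [Finset.mul_sum]
        exact Finset.sum_le_sum fun w _ => hterm w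
    _ = opNorm b * Real.sqrt (∑ w, ∑ c, ‖x (e.symm (c, w))‖ ^ 2) := by
        rw [Real.sqrt_mul (sq_nonneg _), Real.sqrt_sq (opNorm_nonneg b)]

lemma kron_list_prod (l : List (Fin n)) (hl : l.Nodup)
    (b : ∀ r : Fin n, Matrix (Fin (d r)) (Fin (d r)) ℂ) :
    (l.map (fun r => kron (E r (b r)))).prod =
      kron (fun s => if s ∈ l then b s else 1) := by
  classical
  revert hl
  induction l with
  | nil =>
    intro _
    simp only [List.map_nil, List.prod_nil, List.not_mem_nil, if_false]
    exact kron_one.symm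
  | cons r l ih =>
    intro hl
    have hr : r ∉ l := (List.nodup_cons.mp hl).1
    have hl' : l.Nodup := (List.nodup_cons.mp hl).2
    rw [List.map_cons, List.prod_cons, ih hl', kron_mul]
    refine congrArg kron (funext fun s => ?_)
    by_cases hs : s = r
    · subst hs
      rw [show E s (b s) s = b s from Function.update_self _ _ _,
        if_neg hr, if_pos (List.mem_cons_self (a := s) (l := l)), mul_one]
    · rw [show E r (b r) s = 1 from Function.update_of_ne hs _ _, one_mul]
      simp [List.mem_cons, hs]

lemma opNorm_kron_le (hn : 1 ≤ n) (b : ∀ r : Fin n, Matrix (Fin (d r)) (Fin (d r)) ℂ) :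
    opNorm (kron b) ≤ ∏ r, opNorm (b r) := by
  classical
  have h1 : kron b = ((List.finRange n).map (fun r => kron (E r (b r)))).prod := by
    rw [kron_list_prod _ (List.nodup_finRange n)]
    refine (congrArg kron (funext fun s => ?_)).symm
    rw [if_pos (List.mem_finRange s)]
  rw [opNorm, h1, map_list_prod]
  have hne : (List.map (fun r => kron (E r (b r))) (List.finRange n)).map
      (⇑(Matrix.toEuclideanCLM (𝕜 := ℂ))) ≠ [] := by
    refine List.ne_nil_of_length_pos ?_
    simp only [List.length_map, List.length_finRange]
    omega
  refine (List.norm_prod_le' hne).trans ?_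
  simp only [List.map_map, Function.comp_def]
  rw [← Fin.prod_univ_def]
  exact Finset.prod_le_prod (fun r _ => norm_nonneg _) (fun r _ => opNorm_E_le r (b r))

lemma expansion (hn : 1 ≤ n) (x y : ∀ r : Fin n, Matrix (Fin (d r)) (Fin (d r)) ℂ) :
    kron (fun r => x r * y r) + kron (fun r => y r * x r) =
      ((2 : ℂ) ^ ((1 : ℤ) - n)) •
        ∑ S ∈ Finset.univ.filter (fun S : Finset (Fin n) => Even S.card),
          kron (fun r => if r ∈ S then x r * y r - y r * x r else x r * y r + y r * x r) := by
  classical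
  ext p q
  simp only [Matrix.add_apply, Matrix.smul_apply, Matrix.sum_apply, kron, smul_eq_mul]
  set f : Fin n → ℂ := fun r => (x r * y r - y r * x r) (p r) (q r) with hf
  set g : Fin n → ℂ := fun r => (x r * y r + y r * x r) (p r) (q r) with hg
  have hx : ∀ r, (x r * y r) (p r) (q r) = 2⁻¹ * (f r + g r) := by
    intro r; simp only [hf, hg, Matrix.sub_apply, Matrix.add_apply]; ring
  have hy : ∀ r, (y r * x r) (p r) (q r) = 2⁻¹ * (-f r + g r) := by
    intro r; simp only [hf, hg, Matrix.sub_apply, Matrix.add_apply]; ring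
  have hS : ∀ S : Finset (Fin n),
      (∏ r, (if r ∈ S then x r * y r - y r * x r else x r * y r + y r * x r) (p r) (q r)) =
      (∏ r ∈ S, f r) * ∏ r ∈ Sᶜ, g r := by
    intro S
    rw [← Finset.prod_mul_prod_compl S]
    congr 1
    · exact Finset.prod_congr rfl fun r hr => by rw [if_pos hr]
    · exact Finset.prod_congr rfl fun r hr => by rw [if_neg (Finset.mem_compl.mp hr)]
  have hneg : ∀ S : Finset (Fin n), (∏ r ∈ S, -f r) = (-1 : ℂ) ^ S.card * ∏ r ∈ S, f r := by
    intro S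
    calc (∏ r ∈ S, -f r) = ∏ r ∈ S, (-1 : ℂ) * f r :=
          Finset.prod_congr rfl fun r _ => (neg_one_mul (f r)).symm
      _ = (-1 : ℂ) ^ S.card * ∏ r ∈ S, f r := by rw [Finset.prod_mul_distrib, Finset.prod_const]
  have hcard : (Finset.univ : Finset (Fin n)).card = n := by simp
  calc (∏ r, (x r * y r) (p r) (q r)) + ∏ r, (y r * x r) (p r) (q r)
      = 2⁻¹ ^ n * ((∑ t : Finset (Fin n), (∏ r ∈ t, f r) * ∏ r ∈ tᶜ, g r)
          + ∑ t : Finset (Fin n), (∏ r ∈ t, -f r) * ∏ r ∈ tᶜ, g r) := by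
        rw [Finset.prod_congr rfl (fun r _ => hx r), Finset.prod_congr rfl (fun r _ => hy r),
          Finset.prod_mul_distrib, Finset.prod_mul_distrib, Finset.prod_const,
          hcard, Fintype.prod_add f g, Fintype.prod_add (fun r => -f r) g]
        ring
    _ = 2⁻¹ ^ n * ∑ t : Finset (Fin n),
          (if Even t.card then 2 * ((∏ r ∈ t, f r) * ∏ r ∈ tᶜ, g r) else 0) := by
        rw [← Finset.sum_add_distrib]
        congr 1
        refine Finset.sum_congr rfl fun t _ => ?_
        rw [hneg t]
        by_cases hev : Even t.card
        · rw [if_pos hev, hev.neg_one_pow]; ring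
        · rw [if_neg hev, (Nat.not_even_iff_odd.mp hev).neg_one_pow]; ring
    _ = 2⁻¹ ^ n * (2 * ∑ t ∈ Finset.univ.filter (fun t : Finset (Fin n) => Even t.card),
          (∏ r ∈ t, f r) * ∏ r ∈ tᶜ, g r) := by
        rw [Finset.sum_filter (fun t : Finset (Fin n) => Even t.card)
          (fun t => (∏ r ∈ t, f r) * ∏ r ∈ tᶜ, g r)]
        congr 1
        rw [Finset.mul_sum]
        refine Finset.sum_congr rfl fun t _ => ?_
        by_cases hev : Even t.card
        · rw [if_pos hev, if_pos hev]
        · rw [if_neg hev, if_neg hev]; ring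
    _ = (2 : ℂ) ^ ((1 : ℤ) - n) * ∑ t ∈ Finset.univ.filter (fun t : Finset (Fin n) => Even t.card),
          ∏ r, (if r ∈ t then x r * y r - y r * x r else x r * y r + y r * x r) (p r) (q r) := by
        rw [Finset.sum_congr rfl (fun t _ => hS t)]
        rw [zpow_sub₀ (by norm_num : (2:ℂ) ≠ 0), zpow_one, zpow_natCast, inv_pow]
        ring

end ParityAux

open Parity in
/-- Mixed-term defect bound: `‖uᵢuⱼ + uⱼuᵢ‖ ≤ φ⁽ⁿ⁾ᵢⱼ`. -/
theorem mixed_term_defect_bound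
    {n m : ℕ} {d : Fin n → ℕ} (hn : 1 ≤ n) (hd : ∀ r, 1 ≤ d r) (hm : 1 ≤ m)
    (a : ∀ r : Fin n, Fin m → Matrix (Fin (d r)) (Fin (d r)) ℂ)
    (ha_sa : ∀ r i, (a r i).IsHermitian)
    (ha_norm : ∀ r i, opNorm (a r i) ≤ 1)
    (i j : Fin m) (hij : i < j) :
    opNorm (kron (fun r => a r i) * kron (fun r => a r j) +
        kron (fun r => a r j) * kron (fun r => a r i)) ≤ phi a i j := by
  classical
  rw [ParityAux.kron_mul, ParityAux.kron_mul, ParityAux.expansion hn]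
  unfold opNorm phi
  rw [map_smul]
  rw [norm_smul (α := ℂ)
    (β := EuclideanSpace ℂ (∀ r, Fin (d r)) →L[ℂ] EuclideanSpace ℂ (∀ r, Fin (d r)))]
  have h2 : ‖(2 : ℂ) ^ ((1 : ℤ) - n)‖ = (2 : ℝ) ^ ((1 : ℤ) - n) := by
    rw [norm_zpow]; norm_num
  rw [h2]
  refine mul_le_mul_of_nonneg_left ?_ (by positivity)
  rw [map_sum]
  refine (norm_sum_le _ _).trans (Finset.sum_le_sum fun S _ => ?_)
  refine (ParityAux.opNorm_kron_le hn _).trans (le_of_eq ?_)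
  rw [← Finset.prod_mul_prod_compl S]
  congr 1
  · exact Finset.prod_congr rfl fun r hr => by rw [if_pos hr]
  · exact Finset.prod_congr rfl fun r hr => by rw [if_neg (Finset.mem_compl.mp hr)]
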